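/- Let A be an n×n real Hurwitz matrix and Q an n×n real symmetric matrix. Then the function t ↦ exp(tA) · Q · exp(tAᵀ) is integrable on [0, ∞), and the matrix C := 2∫₀^∞ exp(tA) · Q · exp(tAᵀ) dt satisfies the fluctuation–dissipation relation 0 = A·C + C·Aᵀ + 2Q. -/

import Mathlib

open Matrix Polynomial NormedSpace MeasureTheory

attribute [local instance] Matrix.normedAddCommGroup Matrix.normedSpace

section auxiliaries

/-- entries of a generalized-eigenvector lemma: root of charpoly. -/
theorem aux_root_of_genEigvec {n : ℕ} (M : Matrix (Fin n) (Fin n) ℂ) (μ : ℂ) (v : Fin n → ℂ)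
    (hv : v ≠ 0) (m : ℕ) (h : ((M - μ • 1) ^ m) *ᵥ v = 0) : M.charpoly.IsRoot μ := by
  have hdet : ((M - μ • 1) ^ m).det = 0 := (Matrix.exists_mulVec_eq_zero_iff).mp ⟨v, hv, h⟩
  rw [Matrix.det_pow] at hdet
  have h2 : (M - μ • 1).det = 0 := (pow_eq_zero_iff'.mp hdet).1
  have h3 : M.charpoly.eval μ = (scalar (Fin n) μ - M).det := by
    rw [Matrix.charpoly, _root_.eval_det, matPolyEquiv_charmatrix]; simp
  have h4 : scalar (Fin n) μ - M = -(M - μ • 1) := by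
    ext i j; simp [Matrix.scalar_apply, Matrix.one_apply, Matrix.diagonal_apply]
  rw [IsRoot, h3, h4, Matrix.det_neg, h2, mul_zero]

/-- `x ^ k ≤ k! * exp x` for nonnegative reals. -/
theorem aux_pow_le_exp {x : ℝ} (hx : 0 ≤ x) (k : ℕ) : x ^ k / (Nat.factorial k) ≤ Real.exp x := by
  refine le_trans ?_ (Real.sum_le_exp_of_nonneg hx (k + 1))
  exact Finset.single_le_sum (f := fun i => x ^ i / (Nat.factorial i))
    (fun i _ => by positivity) (Finset.self_mem_range_succ k)

end auxiliaries

section linfty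

attribute [local instance 1100] Matrix.linftyOpNormedAddCommGroup Matrix.linftyOpNormedSpace
  Matrix.linftyOpNormedRing Matrix.linftyOpNormedAlgebra

theorem aux_exp_smul_mulVec {n : ℕ} (M : Matrix (Fin n) (Fin n) ℂ) (μ : ℂ) (v : Fin n → ℂ)
    (m : ℕ) (hv : ((M - μ • 1) ^ m) *ᵥ v = 0) (t : ℝ) :
    exp (t • M) *ᵥ v = Complex.exp ((t : ℂ) * μ) •
      ∑ k ∈ Finset.range m,
        (((Nat.factorial k : ℂ))⁻¹ * (t : ℂ) ^ k) • (((M - μ • 1) ^ k) *ᵥ v) := by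
  set N := M - μ • 1 with hN
  have hts : t • M = ((t : ℂ)) • M := (algebraMap_smul ℂ t M).symm
  have hsplit : (t : ℂ) • M = ((t : ℂ) * μ) • (1 : Matrix (Fin n) (Fin n) ℂ) + (t : ℂ) • N := by
    rw [hN, smul_sub, smul_smul]; abel
  have hcomm : Commute (((t : ℂ) * μ) • (1 : Matrix (Fin n) (Fin n) ℂ)) ((t : ℂ) • N) :=
    ((Commute.one_left ((t : ℂ) • N)).smul_left _)
  rw [hts, hsplit, Matrix.exp_add_of_commute _ _ hcomm]
  have h1 : exp (((t : ℂ) * μ) • (1 : Matrix (Fin n) (Fin n) ℂ))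
      = Complex.exp ((t : ℂ) * μ) • (1 : Matrix (Fin n) (Fin n) ℂ) := by
    have := algebraMap_exp_comm (𝕂 := ℂ) (𝔸 := Matrix (Fin n) (Fin n) ℂ) ((t : ℂ) * μ)
    rw [← Complex.exp_eq_exp_ℂ] at this
    simp only [Algebra.algebraMap_eq_smul_one] at this
    exact this.symm
  rw [h1, smul_mul_assoc, one_mul, smul_mulVec]
  congr 1
  let L : Matrix (Fin n) (Fin n) ℂ →ₗ[ℂ] (Fin n → ℂ) :=
    { toFun := (· *ᵥ v)
      map_add' := fun X Y => Matrix.add_mulVec X Y v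
      map_smul' := fun c X => Matrix.smul_mulVec c X v }
  let Lc : Matrix (Fin n) (Fin n) ℂ →L[ℂ] (Fin n → ℂ) := LinearMap.toContinuousLinearMap L
  have hsum : Summable (fun k : ℕ => (Nat.factorial k : ℂ)⁻¹ • ((t : ℂ) • N) ^ k) :=
    expSeries_summable' ((t : ℂ) • N)
  have hL : exp ((t : ℂ) • N) *ᵥ v
      = ∑' k : ℕ, (((Nat.factorial k : ℂ))⁻¹ * (t : ℂ) ^ k) • (N ^ k *ᵥ v) := by
    have h0 : exp ((t : ℂ) • N) *ᵥ v
        = Lc (∑' k : ℕ, (Nat.factorial k : ℂ)⁻¹ • ((t : ℂ) • N) ^ k) := by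
      rw [exp_eq_tsum ℂ]; rfl
    rw [h0, Lc.map_tsum hsum]
    refine tsum_congr fun k => ?_
    rw [_root_.smul_pow, _root_.map_smul, _root_.map_smul, smul_smul]
    rfl
  rw [hL]
  refine tsum_eq_sum fun k hk => ?_
  rw [Finset.mem_range, not_lt] at hk
  have hpow : N ^ k = N ^ (k - m) * N ^ m := by rw [← pow_add, Nat.sub_add_cancel hk]
  rw [hpow, ← Matrix.mulVec_mulVec, hv, Matrix.mulVec_zero, smul_zero]

theorem aux_key_bound {n : ℕ} (A' : Matrix (Fin n) (Fin n) ℂ) {ε : ℝ} (hε : 0 < ε) (μ : ℂ)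
    (hμ : μ.re ≤ -(2 * ε)) (w : Fin n → ℂ) (m : ℕ) (hm : ((A' - μ • 1) ^ m) *ᵥ w = 0) :
    ∃ C, 0 ≤ C ∧ ∀ t : ℝ, 0 ≤ t → ‖exp (t • A') *ᵥ w‖ ≤ C * Real.exp (-ε * t) := by
  refine ⟨∑ k ∈ Finset.range m, ‖((A' - μ • 1) ^ k) *ᵥ w‖ * ε⁻¹ ^ k,
    Finset.sum_nonneg fun k _ => by positivity, fun t ht => ?_⟩
  rw [aux_exp_smul_mulVec A' μ w m hm t, norm_smul]
  have habs : ‖Complex.exp ((t : ℂ) * μ)‖ = Real.exp (t * μ.re) := by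
    rw [Complex.norm_exp, Complex.re_ofReal_mul]
  have hterm : ∀ k : ℕ,
      ‖(((Nat.factorial k : ℂ))⁻¹ * (t : ℂ) ^ k) • (((A' - μ • 1) ^ k) *ᵥ w)‖
        ≤ (ε⁻¹ ^ k * ‖((A' - μ • 1) ^ k) *ᵥ w‖) * Real.exp (ε * t) := by
    intro k
    rw [norm_smul, norm_mul, norm_inv, norm_pow]
    have h1 : ‖(Nat.factorial k : ℂ)‖ = (Nat.factorial k : ℝ) := by
      rw [Complex.norm_natCast]
    have h2 : ‖(t : ℂ)‖ = t := by rw [Complex.norm_real, Real.norm_eq_abs, abs_of_nonneg ht]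
    rw [h1, h2]
    have h3 : (Nat.factorial k : ℝ)⁻¹ * t ^ k ≤ ε⁻¹ ^ k * Real.exp (ε * t) := by
      have h4 : (ε * t) ^ k / (Nat.factorial k) ≤ Real.exp (ε * t) :=
        aux_pow_le_exp (by positivity) k
      have h5 : (Nat.factorial k : ℝ)⁻¹ * t ^ k
          = ε⁻¹ ^ k * ((ε * t) ^ k / (Nat.factorial k)) := by
        rw [mul_pow]
        field_simp
        rw [one_div, inv_pow, mul_assoc, inv_mul_cancel₀ (by positivity), mul_one]
      rw [h5]
      have hik : (0:ℝ) ≤ ε⁻¹ ^ k := by positivity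
      exact mul_le_mul_of_nonneg_left h4 hik
    calc (Nat.factorial k : ℝ)⁻¹ * t ^ k * ‖((A' - μ • 1) ^ k) *ᵥ w‖
        ≤ (ε⁻¹ ^ k * Real.exp (ε * t)) * ‖((A' - μ • 1) ^ k) *ᵥ w‖ :=
          mul_le_mul_of_nonneg_right h3 (norm_nonneg _)
      _ = (ε⁻¹ ^ k * ‖((A' - μ • 1) ^ k) *ᵥ w‖) * Real.exp (ε * t) := by ring
  calc ‖Complex.exp ((t : ℂ) * μ)‖ * ‖∑ k ∈ Finset.range m,
          (((Nat.factorial k : ℂ))⁻¹ * (t : ℂ) ^ k) • (((A' - μ • 1) ^ k) *ᵥ w)‖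
      ≤ Real.exp (t * μ.re) * ∑ k ∈ Finset.range m,
          (ε⁻¹ ^ k * ‖((A' - μ • 1) ^ k) *ᵥ w‖) * Real.exp (ε * t) := by
        rw [habs]
        refine mul_le_mul_of_nonneg_left ?_ (Real.exp_nonneg _)
        exact le_trans (norm_sum_le _ _) (Finset.sum_le_sum fun k _ => hterm k)
    _ ≤ Real.exp (-(2 * ε) * t) * ∑ k ∈ Finset.range m,
          (ε⁻¹ ^ k * ‖((A' - μ • 1) ^ k) *ᵥ w‖) * Real.exp (ε * t) := by
        refine mul_le_mul_of_nonneg_right (Real.exp_le_exp.mpr ?_)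
          (Finset.sum_nonneg fun k _ => by positivity)
        calc t * μ.re ≤ t * (-(2 * ε)) := mul_le_mul_of_nonneg_left hμ ht
          _ = -(2 * ε) * t := by ring
    _ = (∑ k ∈ Finset.range m, ‖((A' - μ • 1) ^ k) *ᵥ w‖ * ε⁻¹ ^ k) * Real.exp (-ε * t) := by
        rw [Finset.mul_sum, Finset.sum_mul]
        refine Finset.sum_congr rfl fun k _ => ?_
        have hE : Real.exp (-(2 * ε) * t) * Real.exp (ε * t) = Real.exp (-ε * t) := by
          rw [← Real.exp_add]; congr 1; ring
        linear_combination (ε⁻¹ ^ k * ‖((A' - μ • 1) ^ k) *ᵥ w‖) * hE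

theorem aux_exp_entry_decay {n : ℕ} (A : Matrix (Fin n) (Fin n) ℝ)
    (hA : ∀ μ : ℂ, ((A.map (Complex.ofReal)).charpoly).IsRoot μ → μ.re < 0) :
    ∃ ε : ℝ, 0 < ε ∧ ∃ C : ℝ, 0 ≤ C ∧ ∀ t : ℝ, 0 ≤ t → ∀ i j,
      |exp (t • A) i j| ≤ C * Real.exp (-ε * t) := by
  classical
  set A' : Matrix (Fin n) (Fin n) ℂ := A.map Complex.ofReal with hA'
  set s : Finset ℝ := ((A'.charpoly.roots).toFinset.image Complex.re) with hs_def
  set ε : ℝ := if h : s.Nonempty then -(s.max' h) / 2 else 1 with hε_def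
  have hne : A'.charpoly ≠ 0 := (Matrix.charpoly_monic A').ne_zero
  have hε : 0 < ε := by
    rw [hε_def]; split_ifs with h
    · have hm := s.max'_mem h
      obtain ⟨μ, hμ, hre⟩ := Finset.mem_image.mp hm
      have h9 := hA μ (Polynomial.mem_roots'.mp (Multiset.mem_toFinset.mp hμ)).2
      linarith
    · norm_num
  have hroot : ∀ μ : ℂ, (A'.charpoly).IsRoot μ → μ.re ≤ -(2 * ε) := by
    intro μ hμ
    have hmem : μ.re ∈ s := by
      rw [hs_def]
      exact Finset.mem_image_of_mem _ (Multiset.mem_toFinset.mpr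
        (Polynomial.mem_roots'.mpr ⟨hne, hμ⟩))
    have hsne : s.Nonempty := ⟨μ.re, hmem⟩
    have hle : μ.re ≤ s.max' hsne := Finset.le_max' _ _ hmem
    rw [hε_def, dif_pos hsne]
    linarith
  -- endomorphism
  have hconv : ∀ (μ : ℂ) (k : ℕ) (w : Fin n → ℂ),
      ((Matrix.toLinAlgEquiv' A' - μ • 1) ^ k) w = ((A' - μ • 1) ^ k) *ᵥ w := by
    intro μ k w
    have h1 : Matrix.toLinAlgEquiv' A' - μ • 1 = Matrix.toLinAlgEquiv' (A' - μ • 1) := by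
      rw [map_sub]
      congr 1
      have h2 := (Matrix.toLinAlgEquiv' (R := ℂ) (n := Fin n)).commutes μ
      rw [Algebra.algebraMap_eq_smul_one, Algebra.algebraMap_eq_smul_one] at h2
      exact h2.symm
    rw [h1, ← map_pow, Matrix.toLinAlgEquiv'_apply]
  have hvec : ∀ v : Fin n → ℂ, ∃ C, 0 ≤ C ∧ ∀ t : ℝ, 0 ≤ t →
      ‖exp (t • A') *ᵥ v‖ ≤ C * Real.exp (-ε * t) := by
    intro v
    have hv_top : v ∈ (⊤ : Submodule ℂ (Fin n → ℂ)) := trivial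
    rw [← Module.End.iSup_maxGenEigenspace_eq_top (Matrix.toLinAlgEquiv' A')] at hv_top
    obtain ⟨F, hF, hFsum⟩ := (Submodule.mem_iSup_iff_exists_finsupp _ _).mp hv_top
    have hbnd : ∀ μ ∈ F.support, ∃ C, 0 ≤ C ∧ ∀ t : ℝ, 0 ≤ t →
        ‖exp (t • A') *ᵥ F μ‖ ≤ C * Real.exp (-ε * t) := by
      intro μ hμ
      have hw := hF μ
      rw [Module.End.mem_maxGenEigenspace] at hw
      obtain ⟨k, hk⟩ := hw
      have hk' : ((A' - μ • 1) ^ k) *ᵥ F μ = 0 := by rw [← hconv]; exact hk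
      have hne0 : F μ ≠ 0 := Finsupp.mem_support_iff.mp hμ
      have heig : Module.End.HasEigenvalue (Matrix.toLinAlgEquiv' A') μ := by
        refine Module.End.hasEigenvalue_of_hasGenEigenvalue (k := k) ?_
        refine (Submodule.ne_bot_iff _).mpr ⟨F μ, ?_, hne0⟩
        exact Module.End.mem_genEigenspace_nat.mpr (LinearMap.mem_ker.mpr hk)
      obtain ⟨v₀, hv₀⟩ := heig.exists_hasEigenvector
      have hroot' : (A'.charpoly).IsRoot μ := by
        refine aux_root_of_genEigvec A' μ v₀ hv₀.right 1 ?_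
        rw [pow_one, Matrix.sub_mulVec, Matrix.smul_mulVec, Matrix.one_mulVec]
        have happ : A' *ᵥ v₀ = μ • v₀ := by
          have h5 := hv₀.apply_eq_smul
          rw [Matrix.toLinAlgEquiv'_apply] at h5
          exact h5
        rw [happ, sub_self]
      exact aux_key_bound A' hε μ (hroot μ hroot') (F μ) k hk'
    choose CC hCC0 hCCb using hbnd
    refine ⟨∑ μ ∈ F.support.attach, CC μ μ.2,
      Finset.sum_nonneg fun μ _ => hCC0 μ μ.2, fun t ht => ?_⟩
    have hv_eq : v = ∑ μ ∈ F.support, F μ := by rw [← hFsum]; rfl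
    calc ‖exp (t • A') *ᵥ v‖
        = ‖∑ μ ∈ F.support, exp (t • A') *ᵥ F μ‖ := by
          rw [hv_eq]
          congr 1
          simp only [← Matrix.mulVecLin_apply]
          exact map_sum _ _ _
      _ ≤ ∑ μ ∈ F.support, ‖exp (t • A') *ᵥ F μ‖ := norm_sum_le _ _
      _ = ∑ μ ∈ F.support.attach, ‖exp (t • A') *ᵥ F μ.1‖ := by
          rw [← Finset.sum_attach F.support fun μ => ‖exp (t • A') *ᵥ F μ‖]
      _ ≤ ∑ μ ∈ F.support.attach, CC μ.1 μ.2 * Real.exp (-ε * t) :=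
          Finset.sum_le_sum fun μ _ => hCCb μ.1 μ.2 t ht
      _ = (∑ μ ∈ F.support.attach, CC μ μ.2) * Real.exp (-ε * t) := by
          rw [Finset.sum_mul]
  -- per-basis-vector constants
  have hvec' : ∀ j : Fin n, ∃ C, 0 ≤ C ∧ ∀ t : ℝ, 0 ≤ t →
      ‖exp (t • A') *ᵥ Pi.single j 1‖ ≤ C * Real.exp (-ε * t) := fun j => hvec _
  choose CJ hCJ0 hCJb using hvec'
  refine ⟨ε, hε, ∑ j, CJ j, Finset.sum_nonneg fun j _ => hCJ0 j, fun t ht i j => ?_⟩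
  -- relate real exp entries with complex ones
  have hmap : (exp (t • A)).map Complex.ofReal = exp (t • A') := by
    have hcont : Continuous fun X : Matrix (Fin n) (Fin n) ℝ =>
        (Complex.ofRealHom.mapMatrix (m := Fin n)) X := by
      simp only [RingHom.mapMatrix_apply]
      exact Continuous.matrix_map continuous_id Complex.continuous_ofReal
    have h1 := map_exp (Complex.ofRealHom.mapMatrix (m := Fin n)) hcont (t • A)
    have h2 : (t • A).map (Complex.ofReal) = t • A' := by
      ext i j
      simp [Matrix.map_apply, Matrix.smul_apply, Complex.real_smul]
      exact Or.inl rfl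
    calc (exp (t • A)).map Complex.ofReal
        = Complex.ofRealHom.mapMatrix (exp (t • A)) := rfl
      _ = exp (Complex.ofRealHom.mapMatrix (t • A)) := h1
      _ = exp (t • A') := by
          rw [RingHom.mapMatrix_apply]
          exact congrArg _ h2
      _ = exp (t • A') := rfl
  have hentry : ((exp (t • A)) i j : ℂ) = exp (t • A') i j := by
    rw [← hmap]; rfl
  have h6 : |exp (t • A) i j| = ‖exp (t • A') i j‖ := by
    rw [← hentry, Complex.norm_real, Real.norm_eq_abs]
  rw [h6]
  have h7 : exp (t • A') i j = (exp (t • A') *ᵥ Pi.single j 1) i := by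
    rw [Matrix.mulVec_single_one]
    rfl
  rw [h7]
  calc ‖(exp (t • A') *ᵥ Pi.single j 1) i‖
      ≤ ‖exp (t • A') *ᵥ Pi.single j 1‖ := norm_le_pi_norm _ i
    _ ≤ CJ j * Real.exp (-ε * t) := hCJb j t ht
    _ ≤ (∑ j', CJ j') * Real.exp (-ε * t) := by
        refine mul_le_mul_of_nonneg_right ?_ (Real.exp_nonneg _)
        exact Finset.single_le_sum (fun j' _ => hCJ0 j') (Finset.mem_univ j)

theorem aux_slope_g {n : ℕ} (A Q : Matrix (Fin n) (Fin n) ℝ) (t : ℝ) :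
    Filter.Tendsto (slope (fun s : ℝ => exp (s • A) * Q * exp (s • Aᵀ)) t)
      (nhdsWithin t {t}ᶜ)
      (nhds (A * (exp (t • A) * Q * exp (t • Aᵀ))
        + (exp (t • A) * Q * exp (t • Aᵀ)) * Aᵀ)) := by
  have h1 := hasDerivAt_exp_smul_const' (𝕂 := ℝ) A t
  have h2 := hasDerivAt_exp_smul_const (𝕂 := ℝ) Aᵀ t
  have h3 := (h1.mul_const Q).mul h2
  have h3' : HasDerivAt (fun s : ℝ => exp (s • A) * Q * exp (s • Aᵀ))
      (A * (exp (t • A) * Q * exp (t • Aᵀ))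
        + (exp (t • A) * Q * exp (t • Aᵀ)) * Aᵀ) t := by
    convert h3 using 1
    · rfl
    · rfl
    · rfl
    · rfl
    · simp only [mul_assoc]; rfl
  exact hasDerivAt_iff_tendsto_slope.mp h3'

end linfty

section supnorm

/-- multiplication bound for the sup (entrywise) norm. -/
theorem aux_sup_norm_mul_le {n : ℕ} (X Y : Matrix (Fin n) (Fin n) ℝ) :
    ‖X * Y‖ ≤ (n : ℝ) * ‖X‖ * ‖Y‖ := by
  refine (Matrix.norm_le_iff (by positivity)).mpr fun i j => ?_
  rw [Matrix.mul_apply]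
  calc ‖∑ k, X i k * Y k j‖ ≤ ∑ k, ‖X i k * Y k j‖ := norm_sum_le _ _
    _ ≤ ∑ _k : Fin n, ‖X‖ * ‖Y‖ := by
        refine Finset.sum_le_sum fun k _ => ?_
        rw [norm_mul]
        exact mul_le_mul (Matrix.norm_entry_le_entrywise_sup_norm X)
          (Matrix.norm_entry_le_entrywise_sup_norm Y) (norm_nonneg _) (norm_nonneg _)
    _ = (n : ℝ) * ‖X‖ * ‖Y‖ := by
        rw [Finset.sum_const, Finset.card_univ, Fintype.card_fin, nsmul_eq_mul, mul_assoc]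

end supnorm

/-- For a real Hurwitz matrix `A` and a symmetric matrix `Q`, the function
`t ↦ exp (t • A) * Q * exp (t • Aᵀ)` is integrable on `[0, ∞)`, and the matrix
`C := 2 • ∫ t in Ici 0, exp (t • A) * Q * exp (t • Aᵀ)` satisfies the
fluctuation–dissipation relation `0 = A * C + C * Aᵀ + 2 • Q`. -/
theorem lyapunov_integral_solves_fdr {n : ℕ} (A Q : Matrix (Fin n) (Fin n) ℝ)
    (hA : ∀ μ : ℂ, ((A.map (Complex.ofReal)).charpoly).IsRoot μ → μ.re < 0)
    (hQ : Qᵀ = Q) :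
    @IntegrableOn ℝ (Matrix (Fin n) (Fin n) ℝ) _ _ SeminormedAddGroup.toContinuousENorm
      (fun t : ℝ => exp (t • A) * Q * exp (t • Aᵀ)) (Set.Ici 0) volume ∧
    (0 : Matrix (Fin n) (Fin n) ℝ) =
      A * ((2 : ℝ) • ∫ t in Set.Ici (0 : ℝ), exp (t • A) * Q * exp (t • Aᵀ)) +
      ((2 : ℝ) • ∫ t in Set.Ici (0 : ℝ), exp (t • A) * Q * exp (t • Aᵀ)) * Aᵀ +
      (2 : ℝ) • Q := by
  set g : ℝ → Matrix (Fin n) (Fin n) ℝ :=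
    fun t => exp (t • A) * Q * exp (t • Aᵀ) with hg
  letI : TopologicalSpace (Matrix (Fin n) (Fin n) ℝ) :=
    (inferInstance : PseudoMetricSpace (Matrix (Fin n) (Fin n) ℝ)).toUniformSpace.toTopologicalSpace
  letI : IsTopologicalRing (Matrix (Fin n) (Fin n) ℝ) := Matrix.topologicalRing
  have hderiv : ∀ t : ℝ, HasDerivAt g (A * g t + g t * Aᵀ) t := by
    intro t
    rw [hasDerivAt_iff_tendsto_slope]
    exact aux_slope_g A Q t
  have hcont : Continuous g := continuous_iff_continuousAt.mpr fun t => (hderiv t).continuousAt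
  obtain ⟨ε, hε, C, hC0, hbd⟩ := aux_exp_entry_decay A hA
  have hnorm_exp : ∀ t : ℝ, 0 ≤ t → ‖exp (t • A)‖ ≤ C * Real.exp (-ε * t) := by
    intro t ht
    refine (Matrix.norm_le_iff (by positivity)).mpr fun i j => ?_
    rw [Real.norm_eq_abs]
    exact hbd t ht i j
  have hnorm_expT : ∀ t : ℝ, 0 ≤ t → ‖exp (t • Aᵀ)‖ ≤ C * Real.exp (-ε * t) := by
    intro t ht
    calc ‖exp (t • Aᵀ)‖ = ‖(exp (t • A))ᵀ‖ := by
          rw [← Matrix.transpose_smul]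
          exact congrArg _ (Matrix.exp_transpose _)
      _ = ‖exp (t • A)‖ := Matrix.norm_transpose _
      _ ≤ C * Real.exp (-ε * t) := hnorm_exp t ht
  set K : ℝ := (n : ℝ) * ((n : ℝ) * C * ‖Q‖) * C with hK
  have hK0 : 0 ≤ K := by positivity
  have hgb : ∀ t : ℝ, 0 ≤ t → ‖g t‖ ≤ K * Real.exp (-(2 * ε) * t) := by
    intro t ht
    have b1 : ‖exp (t • A) * Q‖ ≤ (n : ℝ) * ‖exp (t • A)‖ * ‖Q‖ :=
      aux_sup_norm_mul_le _ _
    have b2 : ‖g t‖ ≤ (n : ℝ) * ‖exp (t • A) * Q‖ * ‖exp (t • Aᵀ)‖ :=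
      aux_sup_norm_mul_le _ _
    have e1 := hnorm_exp t ht
    have e2 := hnorm_expT t ht
    have hexp0 : (0:ℝ) ≤ Real.exp (-ε * t) := Real.exp_nonneg _
    calc ‖g t‖ ≤ (n : ℝ) * ‖exp (t • A) * Q‖ * ‖exp (t • Aᵀ)‖ := b2
      _ ≤ (n : ℝ) * ((n : ℝ) * (C * Real.exp (-ε * t)) * ‖Q‖) * (C * Real.exp (-ε * t)) := by
          have hb1' : ‖exp (t • A) * Q‖ ≤ (n : ℝ) * (C * Real.exp (-ε * t)) * ‖Q‖ :=
            b1.trans (by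
              refine mul_le_mul_of_nonneg_right ?_ (norm_nonneg _)
              exact mul_le_mul_of_nonneg_left e1 (by positivity))
          refine mul_le_mul ?_ e2 (norm_nonneg _) ?_
          · exact mul_le_mul_of_nonneg_left hb1' (by positivity)
          · positivity
      _ = K * Real.exp (-(2 * ε) * t) := by
          rw [hK, show -(2 * ε) * t = -ε * t + -ε * t by ring, Real.exp_add]
          ring
  have hint : IntegrableOn g (Set.Ici (0:ℝ)) := by
    have hmeas : AEStronglyMeasurable g (volume.restrict (Set.Ici (0:ℝ))) :=
      hcont.aestronglyMeasurable
    have hbd_int : IntegrableOn (fun t : ℝ => K * Real.exp (-(2 * ε) * t)) (Set.Ici (0:ℝ)) := by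
      rw [integrableOn_Ici_iff_integrableOn_Ioi]
      exact (exp_neg_integrableOn_Ioi 0 (by positivity)).const_mul _
    refine hbd_int.mono' hmeas ?_
    filter_upwards [ae_restrict_mem measurableSet_Ici] with t ht
    exact hgb t ht
  refine ⟨hint, ?_⟩
  -- FTC and limits
  have hcont_deriv : Continuous fun t => A * g t + g t * Aᵀ :=
    (continuous_const.matrix_mul hcont).add (hcont.matrix_mul continuous_const)
  have hFTC : ∀ T : ℝ, ∫ t in (0:ℝ)..T, (A * g t + g t * Aᵀ) = g T - Q := by
    intro T
    have h0 : g 0 = Q := by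
      simp only [hg, zero_smul, exp_zero, one_mul, mul_one]
    rw [← h0]
    exact intervalIntegral.integral_eq_sub_of_hasDerivAt (fun t _ => hderiv t)
      (hcont_deriv.intervalIntegrable _ _)
  set J : Matrix (Fin n) (Fin n) ℝ := ∫ t in Set.Ici (0:ℝ), g t with hJ
  have hginti : IntegrableOn g (Set.Ioi (0:ℝ)) := hint.mono_set Set.Ioi_subset_Ici_self
  have htend1 : Filter.Tendsto (fun T => ∫ t in (0:ℝ)..T, g t) Filter.atTop (nhds J) := by
    rw [hJ, MeasureTheory.integral_Ici_eq_integral_Ioi]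
    exact intervalIntegral_tendsto_integral_Ioi 0 hginti Filter.tendsto_id
  have hsplit : ∀ T : ℝ, ∫ t in (0:ℝ)..T, (A * g t + g t * Aᵀ)
      = A * (∫ t in (0:ℝ)..T, g t) + (∫ t in (0:ℝ)..T, g t) * Aᵀ := by
    intro T
    have hgi : IntervalIntegrable g volume 0 T := hcont.intervalIntegrable _ _
    have hi1 : IntervalIntegrable (fun t => A * g t) volume 0 T :=
      (continuous_const.matrix_mul hcont).intervalIntegrable _ _
    have hi2 : IntervalIntegrable (fun t => g t * Aᵀ) volume 0 T :=
      (hcont.matrix_mul continuous_const).intervalIntegrable _ _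
    rw [intervalIntegral.integral_add hi1 hi2]
    congr 1
    · have := (LinearMap.toContinuousLinearMap
        (LinearMap.mulLeft ℝ A)).intervalIntegral_comp_comm hgi (a := 0) (b := T)
      simpa using this
    · have := (LinearMap.toContinuousLinearMap
        (LinearMap.mulRight ℝ Aᵀ)).intervalIntegral_comp_comm hgi (a := 0) (b := T)
      simpa using this
  have hgzero : Filter.Tendsto g Filter.atTop (nhds 0) := by
    have hb0 : Filter.Tendsto (fun T : ℝ => K * Real.exp (-(2 * ε) * T))
        Filter.atTop (nhds 0) := by
      have h6 : Filter.Tendsto (fun T : ℝ => (2 * ε) * T) Filter.atTop Filter.atTop :=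
        Filter.Tendsto.const_mul_atTop (by positivity) Filter.tendsto_id
      have h7 : Filter.Tendsto (fun T : ℝ => -((2 * ε) * T)) Filter.atTop Filter.atBot :=
        Filter.tendsto_neg_atTop_atBot.comp h6
      have h8 : Filter.Tendsto (fun T : ℝ => Real.exp (-((2 * ε) * T)))
          Filter.atTop (nhds 0) := Real.tendsto_exp_atBot.comp h7
      have := h8.const_mul K
      simpa [neg_mul] using this
    refine squeeze_zero_norm' ?_ hb0
    filter_upwards [Filter.eventually_ge_atTop (0:ℝ)] with T hT
    exact hgb T hT
  have hlim2 : Filter.Tendsto (fun T => g T - Q) Filter.atTop (nhds (0 - Q)) :=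
    hgzero.sub tendsto_const_nhds
  have hcont2 : Continuous fun X : Matrix (Fin n) (Fin n) ℝ => A * X + X * Aᵀ :=
    (continuous_const.matrix_mul continuous_id).add (continuous_id.matrix_mul continuous_const)
  have hlim1 : Filter.Tendsto (fun T => A * (∫ t in (0:ℝ)..T, g t) + (∫ t in (0:ℝ)..T, g t) * Aᵀ)
      Filter.atTop (nhds (A * J + J * Aᵀ)) := (hcont2.tendsto J).comp htend1
  have heq : A * J + J * Aᵀ = 0 - Q := by
    refine tendsto_nhds_unique ?_ hlim2
    refine hlim1.congr fun T => ?_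
    rw [← hsplit T, hFTC T]
  rw [zero_sub] at heq
  have hfin : A * ((2 : ℝ) • J) + ((2 : ℝ) • J) * Aᵀ + (2 : ℝ) • Q
      = (2 : ℝ) • (A * J + J * Aᵀ + Q) := by
    rw [mul_smul_comm, smul_mul_assoc, smul_add, smul_add]
  rw [hfin, heq, neg_add_cancel, smul_zero]
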